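/- Let X be a countable set, n a positive integer, θ ∈ (0, 1/2), and S = ((x_1,y_1),…,(x_n,y_n)) a sequence in (X × {−1,+1})^n. Set α = (1/2)·ln((1/2+θ)/(1/2−θ)). Define weights D_{1,i} = 1/n for i ∈ [n], and suppose that for r = 1,…,R there are classifiers h_r : X → {−1,+1} with weighted error ∑_{i : h_r(x_i) ≠ y_i} D_{r,i} ≤ 1/2 − θ, where the weights are updated by D_{r+1,i} = D_{r,i}·exp(−α·y_i·h_r(x_i)) / Z_r with Z_r = ∑_{i=1}^n D_{r,i}·exp(−α·y_i·h_r(x_i)). Then for every integer R ≥ ⌈ln(2n)/θ²⌉, the function h = (1/R)·∑_{r=1}^R h_r satisfies y_i·h(x_i) > θ/2 for every i ∈ [n]; equivalently, the (θ/2)-margin loss of h on S is zero. -/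

import Mathlib

open scoped Classical


lemma poly_log_one_add {u : ℝ} (hu0 : 0 ≤ u) :
    Real.log (1 + u) ≤ u - u^2/2 + u^3/3 - u^4/4 + u^5/5 := by
  set g : ℝ → ℝ := fun t => t - t^2/2 + t^3/3 - t^4/4 + t^5/5 - Real.log (1+t) with hg
  have hderiv : ∀ t : ℝ, 0 < t →
      HasDerivAt g (1 - t + t^2 - t^3 + t^4 - 1/(1+t)) t := by
    intro t ht
    have h1 : HasDerivAt (fun s : ℝ => 1 + s) 1 t := by
      simpa using (hasDerivAt_id t).const_add (1:ℝ)
    have hlog : HasDerivAt (fun s : ℝ => Real.log (1 + s)) (1/(1+t)) t := by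
      have := (Real.hasDerivAt_log (x := 1 + t) (by linarith)).comp t h1
      exact this.congr_deriv (by simp)
    have hp : HasDerivAt (fun s : ℝ => s - s^2/2 + s^3/3 - s^4/4 + s^5/5)
        (1 - t + t^2 - t^3 + t^4) t := by
      have h_id := hasDerivAt_id t
      have h2 := (hasDerivAt_pow 2 t).div_const 2
      have h3 := (hasDerivAt_pow 3 t).div_const 3
      have h4 := (hasDerivAt_pow 4 t).div_const 4
      have h5 := (hasDerivAt_pow 5 t).div_const 5
      have := (((h_id.sub h2).add h3).sub h4).add h5
      exact this.congr_deriv (by push_cast; ring)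
    exact hp.sub hlog
  have hmono : MonotoneOn g (Set.Ici 0) := by
    apply monotoneOn_of_deriv_nonneg (convex_Ici 0)
    · intro t ht
      have h1t : (1:ℝ) + t ≠ 0 := by
        have : (0:ℝ) ≤ t := ht
        positivity
      apply ContinuousAt.continuousWithinAt
      have hc : ContinuousAt (fun s : ℝ => Real.log (1 + s)) t :=
        (Real.continuousAt_log h1t).comp (by fun_prop)
      have : ContinuousAt (fun t : ℝ => t - t^2/2 + t^3/3 - t^4/4 + t^5/5) t := by fun_prop
      exact this.sub hc
    · intro t ht
      rw [interior_Ici] at ht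
      exact (hderiv t ht).differentiableAt.differentiableWithinAt
    · intro t ht
      rw [interior_Ici] at ht
      have ht' : 0 < t := ht
      rw [(hderiv t ht').deriv]
      have h1t : (0:ℝ) < 1 + t := by linarith
      have he : 1 - t + t^2 - t^3 + t^4 - 1/(1+t) = t^5/(1+t) := by
        field_simp
        ring
      rw [he]
      exact div_nonneg (pow_nonneg ht'.le 5) h1t.le
  have h0 : g 0 = 0 := by simp [hg]
  have hle := hmono Set.self_mem_Ici (Set.mem_Ici.2 hu0) hu0
  rw [h0] at hle
  have : 0 ≤ u - u^2/2 + u^3/3 - u^4/4 + u^5/5 - Real.log (1+u) := hle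
  linarith

lemma poly_log_one_sub {u : ℝ} (hu0 : 0 ≤ u) (hu1 : u < 1) :
    Real.log (1 - u) ≤ -u - u^2/2 - u^3/3 - u^4/4 - u^5/5 := by
  set g : ℝ → ℝ := fun t => -t - t^2/2 - t^3/3 - t^4/4 - t^5/5 - Real.log (1-t) with hg
  have hderiv : ∀ t : ℝ, t ∈ Set.Ioo (0:ℝ) 1 →
      HasDerivAt g (-1 - t - t^2 - t^3 - t^4 + 1/(1-t)) t := by
    intro t ht
    obtain ⟨ht0, ht1⟩ := ht
    have h1 : HasDerivAt (fun s : ℝ => 1 - s) (-1) t := by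
      simpa using ((hasDerivAt_id t).const_sub (1:ℝ))
    have hlog : HasDerivAt (fun s : ℝ => Real.log (1 - s)) (-(1/(1-t))) t := by
      have h2 := (Real.hasDerivAt_log (x := 1 - t) (by linarith)).comp t h1
      exact h2.congr_deriv (by ring)
    have hp : HasDerivAt (fun s : ℝ => -s - s^2/2 - s^3/3 - s^4/4 - s^5/5)
        (-1 - t - t^2 - t^3 - t^4) t := by
      have h_id := (hasDerivAt_id t).neg
      have h2 := (hasDerivAt_pow 2 t).div_const 2
      have h3 := (hasDerivAt_pow 3 t).div_const 3
      have h4 := (hasDerivAt_pow 4 t).div_const 4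
      have h5 := (hasDerivAt_pow 5 t).div_const 5
      have := (((h_id.sub h2).sub h3).sub h4).sub h5
      exact this.congr_deriv (by push_cast; ring)
    have := hp.sub hlog
    exact this.congr_deriv (by ring)
  have hmono : MonotoneOn g (Set.Ico 0 1) := by
    apply monotoneOn_of_deriv_nonneg (convex_Ico 0 1)
    · intro t ht
      have h1t : (1:ℝ) - t ≠ 0 := by
        have := ht.2
        intro hc; simp at ht; linarith
      apply ContinuousAt.continuousWithinAt
      have hc : ContinuousAt (fun s : ℝ => Real.log (1 - s)) t :=
        (Real.continuousAt_log h1t).comp (by fun_prop)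
      have : ContinuousAt (fun t : ℝ => -t - t^2/2 - t^3/3 - t^4/4 - t^5/5) t := by fun_prop
      exact this.sub hc
    · intro t ht
      rw [interior_Ico] at ht
      exact (hderiv t ht).differentiableAt.differentiableWithinAt
    · intro t ht
      rw [interior_Ico] at ht
      rw [(hderiv t ht).deriv]
      obtain ⟨ht0, ht1⟩ := ht
      have h1t : (0:ℝ) < 1 - t := by linarith
      have : -1 - t - t^2 - t^3 - t^4 + 1/(1-t) = t^5/(1-t) := by
        field_simp
        ring
      rw [this]
      positivity
  have h0 : g 0 = 0 := by simp [hg]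
  have hle := hmono (Set.mem_Ico.2 ⟨le_refl 0, by norm_num⟩) (Set.mem_Ico.2 ⟨hu0, hu1⟩) hu0
  rw [h0] at hle
  have : 0 ≤ -u - u^2/2 - u^3/3 - u^4/4 - u^5/5 - Real.log (1-u) := hle
  linarith

lemma key_log_ineq {u : ℝ} (hu0 : 0 ≤ u) (hu1 : u < 1) :
    (1/2 + u/8) * Real.log (1 + u) + (1/2 - u/8) * Real.log (1 - u) ≤ -(u^2/4) := by
  have h1 := poly_log_one_add hu0
  have h2 := poly_log_one_sub hu0 hu1
  have c1 : (0:ℝ) ≤ 1/2 + u/8 := by linarith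
  have c2 : (0:ℝ) ≤ 1/2 - u/8 := by linarith
  have e1 := mul_le_mul_of_nonneg_left h1 c1
  have e2 := mul_le_mul_of_nonneg_left h2 c2
  have hu2 : u^2 ≤ 1 := by nlinarith
  have hu6 : u^6 ≤ u^4 := by nlinarith [mul_le_mul_of_nonneg_left hu2 (pow_nonneg hu0 4)]
  nlinarith [e1, e2, hu6, pow_nonneg hu0 4]


set_option maxHeartbeats 1000000 in
/-- **AdaBoost with equal weighting achieves large margins.**
If for `R ≥ ⌈ln(2n)/θ²⌉` rounds the weak hypotheses `h r` each have weighted error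
at most `1/2 - θ` under the exponentially updated distributions `D r`, then the
average `(1/R)·∑ h r` has margin strictly larger than `θ/2` on every training example
(equivalently, zero `(θ/2)`-margin loss on `S`). -/
theorem adaboost_margin {X : Type*} [Countable X] (n : ℕ) (hn : 0 < n)
    (θ : ℝ) (hθ : θ ∈ Set.Ioo (0 : ℝ) (1 / 2))
    (x : Fin n → X) (y : Fin n → ℝ) (hy : ∀ i, y i = 1 ∨ y i = -1)
    (α : ℝ) (hα : α = (1 / 2) * Real.log ((1 / 2 + θ) / (1 / 2 - θ)))
    (R : ℕ) (hR : ⌈Real.log (2 * n) / θ ^ 2⌉₊ ≤ R)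
    (h : ℕ → X → ℝ) (hpm : ∀ r, 1 ≤ r → r ≤ R → ∀ x', h r x' = 1 ∨ h r x' = -1)
    (D : ℕ → Fin n → ℝ) (Z : ℕ → ℝ)
    (hD1 : ∀ i, D 1 i = 1 / n)
    (hZ : ∀ r, 1 ≤ r → r ≤ R →
      Z r = ∑ i, D r i * Real.exp (-α * y i * h r (x i)))
    (hupd : ∀ r, 1 ≤ r → r ≤ R → ∀ i,
      D (r + 1) i = D r i * Real.exp (-α * y i * h r (x i)) / Z r)
    (hweak : ∀ r, 1 ≤ r → r ≤ R →
      ∑ i ∈ Finset.univ.filter (fun i => h r (x i) ≠ y i), D r i ≤ 1 / 2 - θ) :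
    ∀ i, y i * ((1 / R : ℝ) * ∑ r ∈ Finset.Icc 1 R, h r (x i)) > θ / 2 := by
  obtain ⟨hθ0, hθ2⟩ := hθ
  have hnR : Nonempty (Fin n) := ⟨⟨0, hn⟩⟩
  have hn' : (0:ℝ) < n := by exact_mod_cast hn
  set a : ℝ := 1/2 + θ with ha_def
  set b : ℝ := 1/2 - θ with hb_def
  have ha : (0:ℝ) < a := by simp [ha_def]; linarith
  have hb : (0:ℝ) < b := by simp [hb_def]; linarith
  have hα0 : 0 < α := by
    rw [hα]
    have : (1:ℝ) < (1/2 + θ) / (1/2 - θ) := by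
      rw [lt_div_iff₀ hb]; simp [ha_def, hb_def]; linarith
    have := Real.log_pos this
    linarith
  -- normalization and positivity of D
  have hDnorm : ∀ r, 1 ≤ r → r ≤ R + 1 → (∀ j, 0 < D r j) ∧ (∑ j, D r j) = 1 := by
    intro r hr1
    induction r, hr1 using Nat.le_induction with
    | base =>
      intro _
      refine ⟨fun j => by rw [hD1 j]; positivity, ?_⟩
      simp [hD1, Finset.sum_const, Finset.card_univ]
      field_simp
    | succ r hr ih =>
      intro hrR
      have hrR' : r ≤ R := by omega
      obtain ⟨hpos, hsum⟩ := ih (by omega)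
      have hZpos : 0 < Z r := by
        rw [hZ r hr hrR']
        exact Finset.sum_pos (fun j _ => mul_pos (hpos j) (Real.exp_pos _))
          Finset.univ_nonempty
      constructor
      · intro j
        rw [hupd r hr hrR' j]
        exact div_pos (mul_pos (hpos j) (Real.exp_pos _)) hZpos
      · rw [Finset.sum_congr rfl fun j _ => hupd r hr hrR' j, ← Finset.sum_div,
          ← hZ r hr hrR', div_self hZpos.ne']
  have hZpos : ∀ r, 1 ≤ r → r ≤ R → 0 < Z r := by
    intro r hr1 hrR
    rw [hZ r hr1 hrR]
    exact Finset.sum_pos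
      (fun j _ => mul_pos ((hDnorm r hr1 (by omega)).1 j) (Real.exp_pos _))
      Finset.univ_nonempty
  intro i
  -- product formula
  have hprod : ∀ r, r ≤ R → D (r+1) i * ∏ s ∈ Finset.Icc 1 r, Z s
      = (1/n : ℝ) * Real.exp (-α * y i * ∑ s ∈ Finset.Icc 1 r, h s (x i)) := by
    intro r
    induction r with
    | zero => intro _; simp [hD1]
    | succ r ih =>
      intro hrR
      have h1r : 1 ≤ r + 1 := by omega
      have hZne := (hZpos (r+1) h1r hrR).ne'
      rw [Finset.prod_Icc_succ_top h1r, Finset.sum_Icc_succ_top h1r,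
        hupd (r+1) h1r hrR i]
      have key : D (r+1) i * Real.exp (-α * y i * h (r+1) (x i)) / Z (r+1) *
          ((∏ s ∈ Finset.Icc 1 r, Z s) * Z (r+1))
          = (D (r+1) i * ∏ s ∈ Finset.Icc 1 r, Z s) *
            Real.exp (-α * y i * h (r+1) (x i)) := by
        field_simp
      rw [key, ih (by omega), mul_assoc, ← Real.exp_add]
      congr 2
      ring
  -- bound on Z r
  set c : ℝ := a * Real.exp (-α) + b * Real.exp α with hc_def
  have hcpos : 0 < c := by
    rw [hc_def]
    exact add_pos (mul_pos ha (Real.exp_pos _)) (mul_pos hb (Real.exp_pos _))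
  have hZle : ∀ r, 1 ≤ r → r ≤ R → Z r ≤ c := by
    intro r hr1 hrR
    obtain ⟨hpos, hsum⟩ := hDnorm r hr1 (by omega)
    rw [hZ r hr1 hrR]
    have hsplit := Finset.sum_filter_add_sum_filter_not Finset.univ
      (fun j => h r (x j) ≠ y j) (fun j => D r j * Real.exp (-α * y j * h r (x j)))
    have e1 : ∀ j ∈ Finset.univ.filter (fun j => h r (x j) ≠ y j),
        D r j * Real.exp (-α * y j * h r (x j)) = D r j * Real.exp α := by
      intro j hj
      rw [Finset.mem_filter] at hj
      rcases hy j with h1 | h1 <;> rcases hpm r hr1 hrR (x j) with h2 | h2 <;>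
        rw [h1, h2] at hj ⊢ <;> first
          | (exact absurd rfl hj.2)
          | (congr 1; ring)
    have e2 : ∀ j ∈ Finset.univ.filter (fun j => ¬ h r (x j) ≠ y j),
        D r j * Real.exp (-α * y j * h r (x j)) = D r j * Real.exp (-α) := by
      intro j hj
      rw [Finset.mem_filter, not_not] at hj
      rcases hy j with h1 | h1 <;>
        rw [hj.2, h1] <;> (congr 1; ring)
    have hsum_split : (∑ j, D r j * Real.exp (-α * y j * h r (x j)))
        = (∑ j ∈ Finset.univ.filter (fun j => h r (x j) ≠ y j), D r j) * Real.exp α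
          + (∑ j ∈ Finset.univ.filter (fun j => ¬ h r (x j) ≠ y j), D r j) * Real.exp (-α) := by
      rw [← hsplit, Finset.sum_congr rfl e1, Finset.sum_congr rfl e2,
        Finset.sum_mul, Finset.sum_mul]
    rw [hsum_split]
    have hWsum := Finset.sum_filter_add_sum_filter_not Finset.univ
      (fun j => h r (x j) ≠ y j) (fun j => D r j)
    rw [hsum] at hWsum
    have hW : ∑ j ∈ Finset.univ.filter (fun j => h r (x j) ≠ y j), D r j ≤ b :=
      hweak r hr1 hrR
    have hW0 : 0 ≤ ∑ j ∈ Finset.univ.filter (fun j => h r (x j) ≠ y j), D r j :=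
      Finset.sum_nonneg (fun j _ => (hpos j).le)
    have hee : Real.exp (-α) ≤ Real.exp α := Real.exp_le_exp.2 (by linarith)
    have hab : a + b = 1 := by simp [ha_def, hb_def]; ring
    nlinarith [mul_le_mul_of_nonneg_right hW (sub_nonneg.2 hee),
      Real.exp_pos α, Real.exp_pos (-α)]
  -- main exponential bound
  set F : ℝ := ∑ s ∈ Finset.Icc 1 R, h s (x i) with hF_def
  have hDle : D (R+1) i ≤ 1 := by
    obtain ⟨hpos, hsum⟩ := hDnorm (R+1) (by omega) (by omega)
    calc D (R+1) i ≤ ∑ j, D (R+1) j :=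
          Finset.single_le_sum (fun j _ => (hpos j).le) (Finset.mem_univ i)
      _ = 1 := hsum
  have hprodle : (∏ s ∈ Finset.Icc 1 R, Z s) ≤ c ^ R := by
    have := Finset.prod_le_prod (s := Finset.Icc 1 R)
      (f := Z) (g := fun _ => c)
      (fun s hs => (hZpos s (Finset.mem_Icc.1 hs).1 (Finset.mem_Icc.1 hs).2).le)
      (fun s hs => hZle s (Finset.mem_Icc.1 hs).1 (Finset.mem_Icc.1 hs).2)
    simpa [Nat.card_Icc] using this
  have hmain : Real.exp (-α * y i * F) ≤ n * c ^ R := by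
    have h1 : (1/n : ℝ) * Real.exp (-α * y i * F) ≤ c ^ R := by
      rw [← hprod R le_rfl]
      calc D (R+1) i * ∏ s ∈ Finset.Icc 1 R, Z s
          ≤ 1 * ∏ s ∈ Finset.Icc 1 R, Z s := by
            apply mul_le_mul_of_nonneg_right hDle
            exact Finset.prod_nonneg fun s hs =>
              (hZpos s (Finset.mem_Icc.1 hs).1 (Finset.mem_Icc.1 hs).2).le
        _ = ∏ s ∈ Finset.Icc 1 R, Z s := one_mul _
        _ ≤ c ^ R := hprodle
    calc Real.exp (-α * y i * F) = n * ((1/n : ℝ) * Real.exp (-α * y i * F)) := by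
          field_simp
      _ ≤ n * c ^ R := by
          apply mul_le_mul_of_nonneg_left h1 hn'.le
  -- logarithmic estimates
  set u : ℝ := 2 * θ with hu_def
  have hu0 : 0 ≤ u := by positivity
  have hu1 : u < 1 := by simp [hu_def]; linarith
  have h1u : (0:ℝ) < 1 + u := by linarith
  have h1u' : (0:ℝ) < 1 - u := by linarith
  have hαeq : α = (1/2) * (Real.log (1 + u) - Real.log (1 - u)) := by
    rw [hα, ← Real.log_div (by linarith) (by linarith)]
    congr 2
    rw [div_eq_div_iff hb.ne' (by linarith : (1:ℝ) - u ≠ 0)]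
    simp [ha_def, hb_def, hu_def]
    ring
  have hc2 : c ^ 2 = (1 + u) * (1 - u) := by
    have hs : Real.exp α * Real.exp α = a / b := by
      rw [← Real.exp_add, hα, show (1/2) * Real.log ((1/2+θ)/(1/2-θ)) +
        (1/2) * Real.log ((1/2+θ)/(1/2-θ)) = Real.log ((1/2+θ)/(1/2-θ)) by ring]
      exact Real.exp_log (div_pos ha hb)
    have hs' : Real.exp α * Real.exp α * b = a := by
      rw [hs]; field_simp
    have hinv' : Real.exp (-α) * Real.exp (-α) * a = b := by
      rw [Real.exp_neg]
      rw [show (Real.exp α)⁻¹ * (Real.exp α)⁻¹ = (Real.exp α * Real.exp α)⁻¹ by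
        rw [mul_inv]]
      rw [hs, inv_div]
      field_simp
    have h0 : Real.exp (-α) * Real.exp α = 1 := by
      rw [← Real.exp_add]; simp
    have h4ab : 4 * (a * b) = (1 + u) * (1 - u) := by
      simp [ha_def, hb_def, hu_def]; ring
    rw [hc_def, ← h4ab]
    linear_combination a * hinv' + b * hs' + 2 * a * b * h0
  have hlogc : Real.log c = (1/2) * (Real.log (1 + u) + Real.log (1 - u)) := by
    have : Real.log (c ^ 2) = 2 * Real.log c := by
      rw [Real.log_pow]; push_cast; ring
    rw [hc2, Real.log_mul h1u.ne' h1u'.ne'] at this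
    linarith
  have hkey := key_log_ineq hu0 hu1
  have hstep : Real.log c + θ * α / 2 ≤ -θ^2 := by
    rw [hlogc, hαeq]
    have : θ = u / 2 := by rw [hu_def]; ring
    rw [this]
    linarith [hkey]
  -- numeric conclusion
  have hR1 : 0 < R := by
    have : (0:ℝ) < Real.log (2 * n) / θ^2 := by
      apply div_pos _ (by positivity)
      apply Real.log_pos
      have : (1:ℝ) ≤ n := by exact_mod_cast hn
      linarith
    have := Nat.ceil_pos.2 this
    omega
  have hRr : (0:ℝ) < R := by exact_mod_cast hR1
  have hRθ : Real.log 2 + Real.log n ≤ (R:ℝ) * θ^2 := by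
    have h1 : Real.log (2 * n) / θ^2 ≤ (R:ℝ) := by
      calc Real.log (2 * n) / θ^2 ≤ (⌈Real.log (2 * n) / θ^2⌉₊ : ℝ) := Nat.le_ceil _
        _ ≤ (R:ℝ) := by exact_mod_cast hR
    have h2 : Real.log (2 * n) ≤ (R:ℝ) * θ^2 := by
      rw [div_le_iff₀ (by positivity : (0:ℝ) < θ^2)] at h1
      linarith
    rw [Real.log_mul (by norm_num) (by positivity)] at h2
    exact h2
  have hlog2 : 0 < Real.log 2 := Real.log_pos (by norm_num)
  have hfinal : (n:ℝ) * c ^ R < Real.exp (-(α * θ * (R:ℝ) / 2)) := by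
    have heq : (n:ℝ) * c ^ R = Real.exp (Real.log n + (R:ℝ) * Real.log c) := by
      rw [Real.exp_add, Real.exp_log hn']
      congr 1
      rw [← Real.exp_log hcpos, ← Real.exp_nat_mul]
      rw [Real.exp_log hcpos]
    rw [heq]
    apply Real.exp_lt_exp.2
    have hmul := mul_le_mul_of_nonneg_left hstep (Nat.cast_nonneg R : (0:ℝ) ≤ R)
    linarith [hmul, hRθ, hlog2]
  have hexp_lt : Real.exp (-α * y i * F) < Real.exp (-(α * θ * (R:ℝ) / 2)) :=
    lt_of_le_of_lt hmain hfinal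
  have hlt : -α * y i * F < -(α * θ * (R:ℝ) / 2) := Real.exp_lt_exp.1 hexp_lt
  have hyF : θ * (R:ℝ) / 2 < y i * F := by
    have h2 : α * (θ * (R:ℝ) / 2) < α * (y i * F) := by linarith [hlt]
    exact lt_of_mul_lt_mul_left h2 hα0.le
  rw [gt_iff_lt, show y i * ((1 / R : ℝ) * F) = (y i * F) / R by ring,
    lt_div_iff₀ hRr]
  linarith
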